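/- (Guideline theorem) Let L be any of the modal systems K_nD, D_nD, T_nD, K45_nD, KD45_nD, S5_nD, let P ⊆ 𝒫 be finite, p ∈ P, k ≥ 0, and δ ∈ D^P_k(L). Suppose there exists l ≥ k such that: for every γ ∈ D^P_l(L) with γ^{↑k} = δ and every L-model (M′,s′) of γ^p, there is an L-model (M,s) with M,s ⊨ δ and (M,s) ≅^col_p (M′,s′). Then dforget_L(δ,p) ≡_L ⋁{γ^p : γ ∈ D^P_l(L) and γ^{↑k} = δ}. -/

import Mathlib

/-!
Common framework: multi-agent epistemic modal logic with distributed knowledge.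
Agents are `Fin n`, atoms are natural numbers.
-/

namespace DKLogic

/-- Formulas of the language `L_D`: atoms, negation, conjunction, disjunction and the
distributed-knowledge modality `D_B` for nonempty sets `B` of agents (together with the
constants `⊤`/`⊥`, which the paper uses as the empty conjunction/disjunction). -/
inductive Formula (n : ℕ) : Type
  | top : Formula n
  | bot : Formula n
  | atom : ℕ → Formula n
  | neg : Formula n → Formula n
  | and : Formula n → Formula n → Formula n
  | or : Formula n → Formula n → Formula n
  | D : {B : Finset (Fin n) // B.Nonempty} → Formula n → Formula n

namespace Formula

/-- Modal depth of a formula. -/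
def depth {n : ℕ} : Formula n → ℕ
  | top => 0
  | bot => 0
  | atom _ => 0
  | neg φ => depth φ
  | and φ ψ => max (depth φ) (depth ψ)
  | or φ ψ => max (depth φ) (depth ψ)
  | D _ φ => depth φ + 1

/-- The atoms occurring in a formula. -/
def atoms {n : ℕ} : Formula n → Finset ℕ
  | top => ∅
  | bot => ∅
  | atom q => {q}
  | neg φ => atoms φ
  | and φ ψ => atoms φ ∪ atoms ψ
  | or φ ψ => atoms φ ∪ atoms ψ
  | D _ φ => atoms φ

end Formula

/-- A Kripke model over world type `W` with `n` agents. -/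
structure KModel (n : ℕ) (W : Type) where
  R : Fin n → W → W → Prop
  V : W → Set ℕ

/-- The distributed accessibility relation `R_B = ⋂_{i ∈ B} R_i`. -/
def KModel.RB {n : ℕ} {W : Type} (M : KModel n W) (B : Finset (Fin n)) (s t : W) : Prop :=
  ∀ i ∈ B, M.R i s t

/-- Satisfaction. -/
def Sat {n : ℕ} {W : Type} (M : KModel n W) : W → Formula n → Prop
  | _, .top => True
  | _, .bot => False
  | s, .atom q => q ∈ M.V s
  | s, .neg φ => ¬ Sat M s φ
  | s, .and φ ψ => Sat M s φ ∧ Sat M s ψ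
  | s, .or φ ψ => Sat M s φ ∨ Sat M s ψ
  | s, .D B φ => ∀ t : W, M.RB B.1 s t → Sat M t φ

/-- Seriality of a relation. -/
def Serial {W : Type} (R : W → W → Prop) : Prop := ∀ x, ∃ y, R x y

/-- Euclideanness of a relation. -/
def Euclidean {W : Type} (R : W → W → Prop) : Prop := ∀ x y z, R x y → R x z → R y z

/-- The six modal systems. -/
inductive MSys : Type
  | K | D | T | K45 | KD45 | S5

/-- `L`-models: frame conditions on each accessibility relation for each system. -/
def IsModel {n : ℕ} {W : Type} : MSys → KModel n W → Prop
  | .K, _ => True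
  | .D, M => ∀ i, Serial (M.R i)
  | .T, M => ∀ i, Reflexive (M.R i)
  | .K45, M => ∀ i, Transitive (M.R i) ∧ Euclidean (M.R i)
  | .KD45, M => ∀ i, Serial (M.R i) ∧ Transitive (M.R i) ∧ Euclidean (M.R i)
  | .S5, M => ∀ i, Reflexive (M.R i) ∧ Transitive (M.R i) ∧ Euclidean (M.R i)

/-- Semantic consequence over `L`-models. -/
def Entails {n : ℕ} (L : MSys) (φ ψ : Formula n) : Prop :=
  ∀ (W : Type) (M : KModel n W), IsModel L M → ∀ s : W, Sat M s φ → Sat M s ψ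

/-- Semantic equivalence over `L`-models. -/
def EquivL {n : ℕ} (L : MSys) (φ ψ : Formula n) : Prop :=
  Entails L φ ψ ∧ Entails L ψ φ

/-- `L`-satisfiability. -/
def SatL {n : ℕ} (L : MSys) (φ : Formula n) : Prop :=
  ∃ (W : Type) (M : KModel n W) (s : W), IsModel L M ∧ Sat M s φ

/-- Collective `p`-bisimulation between two pointed models. -/
def CollPBisim {n : ℕ} {W W' : Type} (M : KModel n W) (s : W) (M' : KModel n W') (s' : W')
    (p : ℕ) : Prop :=
  ∃ ρ : W → W' → Prop, ρ s s' ∧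
    ∀ u u', ρ u u' →
      ((∀ q : ℕ, q ≠ p → (q ∈ M.V u ↔ q ∈ M'.V u')) ∧
       (∀ B : Finset (Fin n), B.Nonempty → ∀ v, M.RB B u v → ∃ v', M'.RB B u' v' ∧ ρ v v') ∧
       (∀ B : Finset (Fin n), B.Nonempty → ∀ v', M'.RB B u' v' → ∃ v, M.RB B u v ∧ ρ v v'))

/-- `ψ` is a result of forgetting `p` in `φ` in system `L`
(written `dforget_L(φ,p) ≡_L ψ` in the paper). -/
def IsForget {n : ℕ} (L : MSys) (φ : Formula n) (p : ℕ) (ψ : Formula n) : Prop :=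
  ψ.atoms ⊆ φ.atoms.erase p ∧
  (∀ (W W' : Type) (M : KModel n W) (M' : KModel n W') (s : W) (s' : W'),
      IsModel L M → IsModel L M' → Sat M s φ → CollPBisim M s M' s' p → Sat M' s' ψ) ∧
  (∀ (W' : Type) (M' : KModel n W') (s' : W'),
      IsModel L M' → Sat M' s' ψ →
      ∃ (W : Type) (M : KModel n W) (s : W), IsModel L M ∧ Sat M s φ ∧ CollPBisim M s M' s' p)

/-- `L` is closed under forgetting: `dforget_L(φ,p)` exists (as an `L`-satisfiable formula)
for every `L`-satisfiable `φ` and every atom `p`. -/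
def ClosedUnderForgetting {n : ℕ} (L : MSys) : Prop :=
  ∀ (φ : Formula n) (p : ℕ), SatL L φ → ∃ ψ : Formula n, SatL L ψ ∧ IsForget L φ p ψ

/-- `ψ` is a uniform interpolant of `φ` in `L` over `P \ {p}`. -/
def IsUI {n : ℕ} (L : MSys) (P : Finset ℕ) (p : ℕ) (φ ψ : Formula n) : Prop :=
  SatL L ψ ∧ ψ.atoms ⊆ P.erase p ∧
  ∀ χ : Formula n, p ∉ χ.atoms → (Entails L φ χ ↔ Entails L ψ χ)

/-- The uniform interpolation property for the system `L`. -/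
def HasUIP {n : ℕ} (L : MSys) : Prop :=
  ∀ (P : Finset ℕ) (p : ℕ) (φ : Formula n),
    p ∈ P → φ.atoms ⊆ P → SatL L φ → ∃ ψ : Formula n, IsUI L P p φ ψ

/-! ### Canonical formulas -/

/-- Big conjunction of a list of formulas (`⊤` for the empty list). -/
def bigAnd {n : ℕ} : List (Formula n) → Formula n
  | [] => .top
  | φ :: l => .and φ (bigAnd l)

/-- Big disjunction of a list of formulas (`⊥` for the empty list). -/
def bigOr {n : ℕ} : List (Formula n) → Formula n
  | [] => .bot
  | φ :: l => .or φ (bigOr l)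

/-- An injective numerical code of formulas, used to fix a canonical ordering. -/
def fcode {n : ℕ} : Formula n → ℕ
  | .top => Nat.pair 0 0
  | .bot => Nat.pair 1 0
  | .atom q => Nat.pair 2 q
  | .neg φ => Nat.pair 3 (fcode φ)
  | .and φ ψ => Nat.pair 4 (Nat.pair (fcode φ) (fcode ψ))
  | .or φ ψ => Nat.pair 5 (Nat.pair (fcode φ) (fcode ψ))
  | .D B φ => Nat.pair 6 (Nat.pair (B.1.sum fun i => 2 ^ (i : ℕ)) (fcode φ))

/-- Insert a formula into a strictly `fcode`-sorted list (dropping duplicates). -/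
def insertF {n : ℕ} (φ : Formula n) : List (Formula n) → List (Formula n)
  | [] => [φ]
  | ψ :: l =>
      if fcode φ < fcode ψ then φ :: ψ :: l
      else if fcode φ = fcode ψ then ψ :: l
      else ψ :: insertF φ l

/-- The canonical (sorted, duplicate-free) list representing the set of formulas in `l`. -/
def normList {n : ℕ} (l : List (Formula n)) : List (Formula n) := l.foldr insertF []

/-- The minterm of `P` that is positive exactly on `S`. -/
def minterm {n : ℕ} (P S : Finset ℕ) : Formula n :=
  bigAnd ((P.sort (· ≤ ·)).map fun q =>
    if q ∈ S then Formula.atom q else Formula.neg (Formula.atom q))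

/-- The subset of `Fin n` whose characteristic bits are those of `m`. -/
def natToFinset (n m : ℕ) : Finset (Fin n) :=
  Finset.univ.filter fun i => m.testBit (i : ℕ)

/-- A canonical enumeration of all nonempty subsets of the agent set. -/
def neSubsets (n : ℕ) : List {B : Finset (Fin n) // B.Nonempty} :=
  ((List.range (2 ^ n)).map (natToFinset n)).filterMap fun B =>
    if h : B.Nonempty then some ⟨B, h⟩ else none

/-- `∇_B Φ = D_B (⋁Φ) ∧ ⋀_{φ ∈ Φ} ¬ D_B ¬ φ`. -/
def nabla {n : ℕ} (B : {B : Finset (Fin n) // B.Nonempty}) (Φ : List (Formula n)) : Formula n :=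
  Formula.and (Formula.D B (bigOr Φ))
    (bigAnd (Φ.map fun φ => Formula.neg (Formula.D B (Formula.neg φ))))

/-- Underlying data of a d-canonical formula: a set of (positive) atoms together with,
for every set `B` of agents, a list of successor data. -/
inductive CData (n : ℕ) : Type
  | mk (S : Finset ℕ) (succ : Finset (Fin n) → List (CData n)) : CData n

/-- The positive-atom component. -/
def CData.S {n : ℕ} : CData n → Finset ℕ
  | mk S _ => S

/-- The `B`-successor data. -/
def CData.succ {n : ℕ} : CData n → Finset (Fin n) → List (CData n)
  | mk _ f => f

/-- The d-canonical formula of depth `k` over `P` determined by the data `d`: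
`δ_0 ∧ ⋀_{B} ∇_B Φ_B`. -/
def toFormula {n : ℕ} (P : Finset ℕ) : ℕ → CData n → Formula n
  | 0, d => minterm P (d.S ∩ P)
  | (k+1), d =>
      Formula.and (minterm P (d.S ∩ P))
        (bigAnd ((neSubsets n).map fun B =>
          nabla B (normList ((d.succ B.1).map fun c => toFormula P k c))))

/-- `D^P_k`: the set of d-canonical formulas of depth `k` over `P`. -/
def DP {n : ℕ} (P : Finset ℕ) (k : ℕ) : Set (Formula n) := Set.range (toFormula P k)

/-- `R_B(δ)` for `δ` the level-`k` canonical formula with data `d`: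
the set of `B`-successor canonical formulas (of level `k - 1`). -/
def RBset {n : ℕ} (P : Finset ℕ) (k : ℕ) (d : CData n) (B : Finset (Fin n)) :
    Set (Formula n) :=
  {φ | ∃ c ∈ d.succ B, φ = toFormula P (k - 1) c}

/-- One pruning step `δ ↦ δ^↓` on data (first argument: the level of the input). -/
def downD {n : ℕ} : ℕ → CData n → CData n
  | 0, d => d
  | 1, d => CData.mk d.S (fun _ => [])
  | (k+2), d => CData.mk d.S (fun B => (d.succ B).map fun c => downD (k+1) c)

/-- `l`-fold pruning `δ ↦ δ^{↓l}` on data (first argument: the level of the input). -/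
def downIter {n : ℕ} : ℕ → ℕ → CData n → CData n
  | _, 0, d => d
  | k, (l+1), d => downIter (k-1) l (downD k d)

/-- Truncation `δ ↦ δ^{↑l}` on data (first argument: the level of the input). -/
def upD {n : ℕ} : ℕ → ℕ → CData n → CData n
  | _, 0, d => CData.mk d.S (fun _ => [])
  | 0, (_+1), d => d
  | (k+1), (l+1), d => CData.mk d.S (fun B => (d.succ B).map fun c => upD k l c)

/-- The canonical formula `δ` of level `k` with data `d`. -/
def cf {n : ℕ} (P : Finset ℕ) (k : ℕ) (d : CData n) : Formula n := toFormula P k d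

/-- `δ^{↓l}` (a canonical formula of level `k - l`). -/
def cfDown {n : ℕ} (P : Finset ℕ) (k l : ℕ) (d : CData n) : Formula n :=
  toFormula P (k - l) (downIter k l d)

/-- `δ^{↑l}` (a canonical formula of level `min k l`). -/
def cfUp {n : ℕ} (P : Finset ℕ) (k l : ℕ) (d : CData n) : Formula n :=
  toFormula P (min k l) (upD k l d)

/-- Literal elimination: `φ^p` replaces every occurrence of `¬p` by `⊤` and subsequently
every remaining occurrence of `p` by `⊤`. -/
def elim {n : ℕ} (p : ℕ) : Formula n → Formula n
  | .top => .top
  | .bot => .bot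
  | .atom q => if q = p then .top else .atom q
  | .neg (.atom q) => if q = p then .top else .neg (.atom q)
  | .neg φ => .neg (elim p φ)
  | .and φ ψ => .and (elim p φ) (elim p ψ)
  | .or φ ψ => .or (elim p φ) (elim p ψ)
  | .D B φ => .D B (elim p φ)


/-! ### Auxiliary development -/

section Aux

variable {n : ℕ} {W : Type}

theorem sat_bigAnd (M : KModel n W) (s : W) (l : List (Formula n)) :
    Sat M s (bigAnd l) ↔ ∀ φ ∈ l, Sat M s φ := by
  induction l with
  | nil => simp [bigAnd, Sat]
  | cons φ l ih => simp [bigAnd, Sat, ih]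

theorem sat_bigOr (M : KModel n W) (s : W) (l : List (Formula n)) :
    Sat M s (bigOr l) ↔ ∃ φ ∈ l, Sat M s φ := by
  induction l with
  | nil => simp [bigOr, Sat]
  | cons φ l ih => simp [bigOr, Sat, ih]

theorem mem_atoms_bigAnd {q : ℕ} (l : List (Formula n)) :
    q ∈ (bigAnd l).atoms ↔ ∃ φ ∈ l, q ∈ φ.atoms := by
  induction l with
  | nil => simp [bigAnd, Formula.atoms]
  | cons φ l ih => simp [bigAnd, Formula.atoms, ih]

theorem mem_atoms_bigOr {q : ℕ} (l : List (Formula n)) :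
    q ∈ (bigOr l).atoms ↔ ∃ φ ∈ l, q ∈ φ.atoms := by
  induction l with
  | nil => simp [bigOr, Formula.atoms]
  | cons φ l ih => simp [bigOr, Formula.atoms, ih]

/-! #### Injectivity of `fcode` -/

theorem two_pow_finset_inj :
    Function.Injective (fun s : Finset ℕ => ∑ i ∈ s, 2 ^ i) := by
  intro s t h
  have hs : ((s.sort (· ≤ ·)).map (fun i => 2 ^ i)).sum = ∑ i ∈ s, 2 ^ i := by
    rw [← Finset.sum_map_toList]
    exact List.Perm.sum_eq (List.Perm.map _ (Finset.sort_perm_toList s (·≤·)))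
  have ht : ((t.sort (· ≤ ·)).map (fun i => 2 ^ i)).sum = ∑ i ∈ t, 2 ^ i := by
    rw [← Finset.sum_map_toList]
    exact List.Perm.sum_eq (List.Perm.map _ (Finset.sort_perm_toList t (·≤·)))
  have hss := Nat.bitIndices_twoPowsum (L := s.sort (· ≤ ·)) (Finset.sortedLT_sort s)
  have hts := Nat.bitIndices_twoPowsum (L := t.sort (· ≤ ·)) (Finset.sortedLT_sort t)
  have h' : ∑ i ∈ s, 2 ^ i = ∑ i ∈ t, 2 ^ i := h
  have : s.sort (· ≤ ·) = t.sort (· ≤ ·) := by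
    rw [← hss, ← hts, hs, ht, h']
  ext a
  rw [← Finset.mem_sort (· ≤ ·), ← Finset.mem_sort (α := ℕ) (· ≤ ·), this]

theorem fin_two_pow_sum_inj {B C : Finset (Fin n)}
    (h : (B.sum fun i => 2 ^ (i : ℕ)) = C.sum fun i => 2 ^ (i : ℕ)) : B = C := by
  have hB : (B.image (Fin.val)).sum (fun i => 2 ^ i) = B.sum fun i => 2 ^ (i : ℕ) :=
    Finset.sum_image (by intro x _ y _ hxy; exact Fin.val_injective hxy)
  have hC : (C.image (Fin.val)).sum (fun i => 2 ^ i) = C.sum fun i => 2 ^ (i : ℕ) :=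
    Finset.sum_image (by intro x _ y _ hxy; exact Fin.val_injective hxy)
  have : B.image Fin.val = C.image Fin.val := by
    apply two_pow_finset_inj
    simp only [hB, hC, h]
  exact Finset.image_injective Fin.val_injective this

theorem fcode_inj : ∀ {φ ψ : Formula n}, fcode φ = fcode ψ → φ = ψ := by
  intro φ
  induction φ with
  | top => intro ψ h; cases ψ <;> simp [fcode, Nat.pair_eq_pair] at h <;> rfl
  | bot => intro ψ h; cases ψ <;> simp [fcode, Nat.pair_eq_pair] at h <;> rfl
  | atom q => intro ψ h; cases ψ <;> simp [fcode, Nat.pair_eq_pair] at h; rw [h]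
  | neg φ ih =>
      intro ψ h; cases ψ <;> simp [fcode, Nat.pair_eq_pair] at h
      rw [ih h]
  | and φ₁ φ₂ ih₁ ih₂ =>
      intro ψ h; cases ψ <;> simp [fcode, Nat.pair_eq_pair] at h
      rw [ih₁ h.1, ih₂ h.2]
  | or φ₁ φ₂ ih₁ ih₂ =>
      intro ψ h; cases ψ <;> simp [fcode, Nat.pair_eq_pair] at h
      rw [ih₁ h.1, ih₂ h.2]
  | D B φ ih =>
      intro ψ h; cases ψ <;> simp [fcode, Nat.pair_eq_pair] at h
      rw [ih h.2]
      congr 1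
      exact Subtype.ext (fin_two_pow_sum_inj h.1)

end Aux
section Aux2

variable {n : ℕ} {W : Type}

/-- Strict ordering of formulas by code. -/
def flt (a b : Formula n) : Prop := fcode a < fcode b

instance : IsAntisymm (Formula n) flt :=
  ⟨fun a b h1 h2 => absurd (lt_trans h1 h2) (lt_irrefl _)⟩

instance : IsIrrefl (Formula n) flt := ⟨fun a => lt_irrefl (fcode a)⟩

theorem mem_insertF {a φ : Formula n} : ∀ {l : List (Formula n)},
    a ∈ insertF φ l ↔ a = φ ∨ a ∈ l := by
  intro l
  induction l with
  | nil => simp [insertF]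
  | cons ψ l ih =>
      simp only [insertF]
      rcases lt_trichotomy (fcode φ) (fcode ψ) with h1 | h2 | h3
      · rw [if_pos h1]
        simp [List.mem_cons]
      · rw [if_neg (by rw [h2]; exact lt_irrefl _), if_pos h2]
        have hφψ : φ = ψ := fcode_inj h2
        subst hφψ
        simp [List.mem_cons]
      · rw [if_neg (not_lt.2 h3.le), if_neg h3.ne']
        simp only [List.mem_cons, ih]
        tauto

theorem sorted_insertF {φ : Formula n} : ∀ {l : List (Formula n)},
    l.Pairwise flt → (insertF φ l).Pairwise flt := by
  intro l
  induction l with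
  | nil => intro _; simp [insertF]
  | cons ψ l ih =>
      intro hs
      rw [List.pairwise_cons] at hs
      simp only [insertF]
      rcases lt_trichotomy (fcode φ) (fcode ψ) with h1 | h2 | h3
      · rw [if_pos h1, List.pairwise_cons]
        refine ⟨?_, by rw [List.pairwise_cons]; exact hs⟩
        intro b hb
        rcases List.mem_cons.1 hb with rfl | hb
        · exact h1
        · exact lt_trans h1 (hs.1 b hb)
      · rw [if_neg (by rw [h2]; exact lt_irrefl _), if_pos h2, List.pairwise_cons]
        exact hs
      · rw [if_neg (not_lt.2 h3.le), if_neg h3.ne', List.pairwise_cons]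
        refine ⟨?_, ih hs.2⟩
        intro b hb
        rcases mem_insertF.1 hb with rfl | hb
        · exact h3
        · exact hs.1 b hb

theorem mem_normList {a : Formula n} {l : List (Formula n)} :
    a ∈ normList l ↔ a ∈ l := by
  induction l with
  | nil => simp [normList]
  | cons φ l ih =>
      show a ∈ insertF φ (normList l) ↔ _
      rw [mem_insertF, List.mem_cons, ih]

theorem sorted_normList (l : List (Formula n)) : (normList l).Pairwise flt := by
  induction l with
  | nil => simp [normList]
  | cons φ l ih => exact sorted_insertF ih

theorem sorted_eq_of_mem_iff {l₁ l₂ : List (Formula n)} (h₁ : l₁.Pairwise flt)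
    (h₂ : l₂.Pairwise flt) (h : ∀ a, a ∈ l₁ ↔ a ∈ l₂) : l₁ = l₂ := by
  have hp : List.Perm l₁ l₂ := (List.perm_ext_iff_of_nodup h₁.nodup h₂.nodup).2 h
  exact List.Perm.eq_of_pairwise' h₁ h₂ hp

end Aux2
section Aux3

variable {n : ℕ} {W : Type}

theorem sat_minterm (M : KModel n W) (t : W) (P S : Finset ℕ) :
    Sat M t (minterm (n := n) P S) ↔ ∀ q ∈ P, (q ∈ S ↔ q ∈ M.V t) := by
  rw [minterm, sat_bigAnd]
  constructor
  · intro h q hq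
    have hm := h _ (List.mem_map.2 ⟨q, (Finset.mem_sort _).2 hq, rfl⟩)
    by_cases hqS : q ∈ S
    · rw [if_pos hqS] at hm
      exact iff_of_true hqS hm
    · rw [if_neg hqS] at hm
      exact iff_of_false hqS hm
  · intro h φ hφ
    rcases List.mem_map.1 hφ with ⟨q, hq, rfl⟩
    have hqP := (Finset.mem_sort _).1 hq
    by_cases hqS : q ∈ S
    · rw [if_pos hqS]
      exact (h q hqP).1 hqS
    · rw [if_neg hqS]
      exact fun hv => hqS ((h q hqP).2 hv)

theorem mem_atoms_minterm {q : ℕ} {P S : Finset ℕ} :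
    q ∈ (minterm (n := n) P S).atoms ↔ q ∈ P := by
  rw [minterm, mem_atoms_bigAnd]
  constructor
  · rintro ⟨φ, hφ, hq⟩
    rcases List.mem_map.1 hφ with ⟨r, hr, rfl⟩
    have hq' : q = r := by
      by_cases h : r ∈ S <;> simp [h, Formula.atoms] at hq <;> exact hq
    subst hq'
    exact (Finset.mem_sort _).1 hr
  · intro hq
    refine ⟨_, List.mem_map.2 ⟨q, (Finset.mem_sort _).2 hq, rfl⟩, ?_⟩
    by_cases h : q ∈ S <;> simp [h, Formula.atoms]

theorem sat_nabla (M : KModel n W) (t : W) (B : {B : Finset (Fin n) // B.Nonempty})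
    (Φ : List (Formula n)) :
    Sat M t (nabla B Φ) ↔
      ((∀ v, M.RB B.1 t v → ∃ φ ∈ Φ, Sat M v φ) ∧
       (∀ φ ∈ Φ, ∃ v, M.RB B.1 t v ∧ Sat M v φ)) := by
  constructor
  · intro h
    obtain ⟨hbox, hdia⟩ := h
    constructor
    · intro v hv
      exact (sat_bigOr M v Φ).1 (hbox v hv)
    · intro φ hφ
      have hm := (sat_bigAnd M t _).1 hdia _ (List.mem_map.2 ⟨φ, hφ, rfl⟩)
      have h2 : ¬ ∀ v, M.RB B.1 t v → ¬ Sat M v φ := hm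
      push_neg at h2
      exact h2
  · rintro ⟨hbox, hdia⟩
    refine ⟨?_, ?_⟩
    · intro v hv
      exact (sat_bigOr M v Φ).2 (hbox v hv)
    · rw [sat_bigAnd]
      rintro ψ hψ
      rcases List.mem_map.1 hψ with ⟨φ, hφ, rfl⟩
      rcases hdia φ hφ with ⟨v, hv, hs⟩
      intro hall
      exact hall v hv hs

theorem minterm_eq_of_sat {M : KModel n W} {t : W} {P S S' : Finset ℕ}
    (h : Sat M t (minterm (n := n) P (S ∩ P)))
    (h' : Sat M t (minterm (n := n) P (S' ∩ P))) :
    minterm (n := n) P (S ∩ P) = minterm (n := n) P (S' ∩ P) := by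
  rw [sat_minterm] at h h'
  congr 1
  ext q
  by_cases hqP : q ∈ P
  · exact (h q hqP).trans (h' q hqP).symm
  · simp [Finset.mem_inter, hqP]

theorem toFormula_unique (M : KModel n W) (P : Finset ℕ) :
    ∀ (k : ℕ) (d d' : CData n) (t : W), Sat M t (toFormula P k d) →
      Sat M t (toFormula P k d') → toFormula P k d = toFormula P k d' := by
  intro k
  induction k with
  | zero =>
      intro d d' t h h'
      simp only [toFormula] at h h' ⊢
      exact minterm_eq_of_sat h h'
  | succ k ih =>
      intro d d' t h h'
      simp only [toFormula] at h h' ⊢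
      obtain ⟨h1, h2⟩ := h
      obtain ⟨h1', h2'⟩ := h'
      have hx := (sat_bigAnd M t _).1 h2
      have hx' := (sat_bigAnd M t _).1 h2'
      congr 1
      · exact minterm_eq_of_sat h1 h1'
      · refine congrArg bigAnd (List.map_congr_left ?_)
        intro B hB
        have nB := (sat_nabla M t B _).1 (hx _ (List.mem_map.2 ⟨B, hB, rfl⟩))
        have nB' := (sat_nabla M t B _).1 (hx' _ (List.mem_map.2 ⟨B, hB, rfl⟩))
        apply congrArg
        apply sorted_eq_of_mem_iff (sorted_normList _) (sorted_normList _)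
        intro a
        constructor
        · intro ha
          rcases nB.2 a ha with ⟨v, hv, hsv⟩
          rcases nB'.1 v hv with ⟨a', ha', hsv'⟩
          rcases List.mem_map.1 (mem_normList.1 ha) with ⟨c, hc, rfl⟩
          rcases List.mem_map.1 (mem_normList.1 ha') with ⟨c', hc', rfl⟩
          rw [ih c c' v hsv hsv']
          exact ha'
        · intro ha
          rcases nB'.2 a ha with ⟨v, hv, hsv⟩
          rcases nB.1 v hv with ⟨a', ha', hsv'⟩
          rcases List.mem_map.1 (mem_normList.1 ha) with ⟨c, hc, rfl⟩
          rcases List.mem_map.1 (mem_normList.1 ha') with ⟨c', hc', rfl⟩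
          rw [ih c c' v hsv hsv']
          exact ha'

end Aux3
section Aux4

variable {n : ℕ}

/-- The sorted lists over a finite set of formulas form a finite set. -/
theorem finite_sorted_lists {F : Set (Formula n)} (hF : F.Finite) :
    {l : List (Formula n) | l.Pairwise flt ∧ ∀ a ∈ l, a ∈ F}.Finite := by
  set LS := {l : List (Formula n) | l.Pairwise flt ∧ ∀ a ∈ l, a ∈ F} with hLS
  have hinj : Set.InjOn (fun l : List (Formula n) => {a | a ∈ l}) LS := by
    intro l₁ h₁ l₂ h₂ h
    refine sorted_eq_of_mem_iff h₁.1 h₂.1 ?_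
    intro a
    exact ⟨fun ha => (Set.ext_iff.1 h a).1 ha, fun ha => (Set.ext_iff.1 h a).2 ha⟩
  have himg : (fun l : List (Formula n) => {a | a ∈ l}) '' LS ⊆ {s | s ⊆ F} := by
    rintro _ ⟨l, hl, rfl⟩
    intro a ha
    exact hl.2 a ha
  exact Set.Finite.of_finite_image (hF.finite_subsets.subset himg) hinj

theorem range_toFormula_finite (P : Finset ℕ) :
    ∀ k : ℕ, (Set.range (toFormula (n := n) P k)).Finite := by
  intro k
  induction k with
  | zero =>
      apply Set.Finite.subset ((P.powerset.finite_toSet).image (minterm (n := n) P))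
      rintro _ ⟨d, rfl⟩
      exact ⟨d.S ∩ P, by simp [Finset.mem_powerset], rfl⟩
  | succ k ih =>
      have hLS := finite_sorted_lists ih
      -- finiteness of the possible "nabla-conjunction" parts, by induction on the list
      -- of agent groups
      have aux : ∀ bs : List {B : Finset (Fin n) // B.Nonempty},
          Set.Finite {ψ : Formula n | ∃ d : CData n,
            ψ = bigAnd (bs.map fun B =>
              nabla B (normList ((d.succ B.1).map fun c => toFormula P k c)))} := by
        intro bs
        induction bs with
        | nil =>
            apply Set.Finite.subset (Set.finite_singleton (Formula.top (n := n)))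
            rintro _ ⟨d, rfl⟩
            simp [bigAnd]
        | cons B bs ihbs =>
            apply Set.Finite.subset (Set.Finite.image2
              (fun l ψ => Formula.and (nabla B l) ψ) hLS ihbs)
            rintro _ ⟨d, rfl⟩
            refine Set.mem_image2.2 ⟨normList ((d.succ B.1).map fun c => toFormula P k c),
              ⟨sorted_normList _, ?_⟩, _, ⟨d, rfl⟩, rfl⟩
            intro a ha
            rcases List.mem_map.1 (mem_normList.1 ha) with ⟨c, _, rfl⟩
            exact ⟨c, rfl⟩
      apply Set.Finite.subset (Set.Finite.image2 (fun m ψ => Formula.and m ψ)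
        ((P.powerset.finite_toSet).image (minterm (n := n) P)) (aux (neSubsets n)))
      rintro _ ⟨d, rfl⟩
      refine Set.mem_image2.2 ⟨minterm P (d.S ∩ P),
        ⟨d.S ∩ P, by simp [Finset.mem_powerset], rfl⟩, _, ⟨d, rfl⟩, rfl⟩

end Aux4
section Aux5

variable {n : ℕ} {W : Type}

open Classical in
/-- The positive atoms of `P` at a world. -/
noncomputable def Vfin (M : KModel n W) (P : Finset ℕ) (t : W) : Finset ℕ :=
  P.filter (fun q => q ∈ M.V t)

theorem mem_Vfin {M : KModel n W} {P : Finset ℕ} {t : W} {q : ℕ} :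
    q ∈ Vfin M P t ↔ q ∈ P ∧ q ∈ M.V t := by
  classical
  simp [Vfin]

/-- Finiteness of the image of a set of worlds under `t ↦ toFormula P k (f t)`. -/
theorem image_toFormula_finite (P : Finset ℕ) (k : ℕ) (f : W → CData n) (S : Set W) :
    ((fun t => toFormula P k (f t)) '' S).Finite :=
  (range_toFormula_finite P k).subset (by rintro _ ⟨t, -, rfl⟩; exact ⟨f t, rfl⟩)

/-- Choose, for every formula realized among `S` via `f`, a representative datum. -/
noncomputable def chooseList (P : Finset ℕ) (k : ℕ) (f : W → CData n) (S : Set W) :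
    List (CData n) :=
  (image_toFormula_finite P k f S).toFinset.attach.toList.map
    (fun φ => f (Classical.choose
      (((image_toFormula_finite P k f S).mem_toFinset.1 φ.2 : φ.1 ∈ _))))

theorem chooseList_spec1 {P : Finset ℕ} {k : ℕ} {f : W → CData n} {S : Set W} :
    ∀ c ∈ chooseList P k f S, ∃ t ∈ S, c = f t := by
  intro c hc
  rcases List.mem_map.1 hc with ⟨φ, _, rfl⟩
  have hz := Classical.choose_spec
    (((image_toFormula_finite P k f S).mem_toFinset.1 φ.2 : φ.1 ∈ _))
  exact ⟨_, hz.1, rfl⟩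

theorem chooseList_spec2 {P : Finset ℕ} {k : ℕ} {f : W → CData n} {S : Set W} :
    ∀ t ∈ S, ∃ c ∈ chooseList P k f S, toFormula P k c = toFormula P k (f t) := by
  intro t ht
  have hmem : toFormula P k (f t) ∈ (image_toFormula_finite P k f S).toFinset :=
    (image_toFormula_finite P k f S).mem_toFinset.2 ⟨t, ht, rfl⟩
  refine ⟨f (Classical.choose
      (((image_toFormula_finite P k f S).mem_toFinset.1
        ((⟨_, hmem⟩ : {x // x ∈ (image_toFormula_finite P k f S).toFinset}).2) : _))), ?_, ?_⟩
  · exact List.mem_map.2 ⟨⟨_, hmem⟩, by simp [Finset.mem_toList], rfl⟩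
  · have hz := Classical.choose_spec
      (((image_toFormula_finite P k f S).mem_toFinset.1
        ((⟨_, hmem⟩ : {x // x ∈ (image_toFormula_finite P k f S).toFinset}).2) : _))
    exact hz.2

/-- Extraction of a canonical datum of level `k` from a pointed model. -/
noncomputable def extract (M : KModel n W) (P : Finset ℕ) : ℕ → W → CData n
  | 0, t => CData.mk (Vfin M P t) (fun _ => [])
  | (k+1), t => CData.mk (Vfin M P t)
      (fun B => chooseList P k (fun t' => extract M P k t') {t' | M.RB B t t'})

theorem extract_sat (M : KModel n W) (P : Finset ℕ) :
    ∀ (k : ℕ) (t : W), Sat M t (toFormula P k (extract M P k t)) := by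
  intro k
  induction k with
  | zero =>
      intro t
      simp only [toFormula, extract]
      rw [sat_minterm]
      intro q hq
      simp [mem_Vfin, Finset.mem_inter, hq, CData.S]
  | succ k ih =>
      intro t
      simp only [toFormula, extract]
      refine ⟨?_, ?_⟩
      · rw [sat_minterm]
        intro q hq
        simp [mem_Vfin, Finset.mem_inter, hq, CData.S]
      · rw [sat_bigAnd]
        rintro ψ hψ
        rcases List.mem_map.1 hψ with ⟨B, hB, rfl⟩
        rw [sat_nabla]
        constructor
        · intro v hv
          rcases chooseList_spec2 (P := P) (k := k) (f := fun t' => extract M P k t')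
            (S := {t' | M.RB B.1 t t'}) v hv with ⟨c, hc, hceq⟩
          refine ⟨toFormula P k c, ?_, ?_⟩
          · exact mem_normList.2 (List.mem_map.2 ⟨c, hc, rfl⟩)
          · rw [hceq]; exact ih v
        · intro φ hφ
          rcases List.mem_map.1 (mem_normList.1 hφ) with ⟨c, hc, rfl⟩
          rcases chooseList_spec1 (P := P) (k := k) (f := fun t' => extract M P k t')
            (S := {t' | M.RB B.1 t t'}) c hc with ⟨v, hv, rfl⟩
          exact ⟨v, hv, ih v⟩

end Aux5
section Aux6

variable {n : ℕ} {W : Type}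

theorem sat_upD (M : KModel n W) (P : Finset ℕ) :
    ∀ (l k : ℕ) (e : CData n) (t : W), Sat M t (toFormula P l e) →
      Sat M t (toFormula P (min l k) (upD l k e)) := by
  intro l
  induction l with
  | zero =>
      intro k e t h
      cases k with
      | zero => simpa [upD, toFormula, CData.S] using h
      | succ k => simpa [upD] using h
  | succ l ihl =>
      intro k e t h
      cases k with
      | zero =>
          simp only [Nat.min_zero, upD, toFormula]
          simp only [toFormula] at h
          exact h.1
      | succ k =>
          rw [Nat.succ_min_succ]
          simp only [toFormula, upD] at h ⊢
          obtain ⟨h1, h2⟩ := h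
          have hx := (sat_bigAnd M t _).1 h2
          refine ⟨h1, ?_⟩
          rw [sat_bigAnd]
          rintro ψ hψ
          rcases List.mem_map.1 hψ with ⟨B, hB, rfl⟩
          have nB := (sat_nabla M t B _).1 (hx _ (List.mem_map.2 ⟨B, hB, rfl⟩))
          rw [sat_nabla]
          constructor
          · intro v hv
            rcases nB.1 v hv with ⟨φ, hφ, hsv⟩
            rcases List.mem_map.1 (mem_normList.1 hφ) with ⟨c, hc, rfl⟩
            refine ⟨toFormula P (min l k) (upD l k c), ?_, ihl k c v hsv⟩
            apply mem_normList.2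
            refine List.mem_map.2 ⟨upD l k c, ?_, rfl⟩
            simp only [CData.succ]
            exact List.mem_map.2 ⟨c, hc, rfl⟩
          · intro φ hφ
            rcases List.mem_map.1 (mem_normList.1 hφ) with ⟨c', hc', rfl⟩
            simp only [CData.succ] at hc'
            rcases List.mem_map.1 hc' with ⟨c, hc, rfl⟩
            have : toFormula P l c ∈ normList ((e.succ B.1).map fun c => toFormula P l c) :=
              mem_normList.2 (List.mem_map.2 ⟨c, hc, rfl⟩)
            rcases nB.2 _ this with ⟨v, hv, hsv⟩
            exact ⟨v, hv, ihl k c v hsv⟩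

end Aux6
section Aux7

variable {n : ℕ} {W : Type} {p : ℕ}

theorem elim_neg_not_atom {φ : Formula n} (h : ∀ q, φ ≠ .atom q) :
    elim p (.neg φ) = .neg (elim p φ) := by
  cases φ with
  | atom q => exact absurd rfl (h q)
  | top => rfl
  | bot => rfl
  | neg φ => rfl
  | and φ ψ => rfl
  | or φ ψ => rfl
  | D B φ => rfl

theorem elim_bigAnd (l : List (Formula n)) :
    elim p (bigAnd l) = bigAnd (l.map (elim p)) := by
  induction l with
  | nil => rfl
  | cons φ l ih => simp [bigAnd, elim, ih]

theorem elim_bigOr (l : List (Formula n)) :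
    elim p (bigOr l) = bigOr (l.map (elim p)) := by
  induction l with
  | nil => rfl
  | cons φ l ih => simp [bigOr, elim, ih]

theorem toFormula_isAnd {P : Finset ℕ} (hP : P.Nonempty) :
    ∀ (k : ℕ) (d : CData n) (q : ℕ), toFormula P k d ≠ .atom q := by
  intro k d q
  cases k with
  | succ k => simp [toFormula]
  | zero =>
      simp only [toFormula, minterm]
      obtain ⟨a, ha⟩ := hP
      have : a ∈ P.sort (· ≤ ·) := (Finset.mem_sort _).2 ha
      cases hs : P.sort (· ≤ ·) with
      | nil => rw [hs] at this; exact absurd this List.not_mem_nil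
      | cons b L => simp [hs, bigAnd]

theorem sat_elim_minterm {M : KModel n W} {t : W} {P S : Finset ℕ}
    (h : Sat M t (minterm (n := n) P S)) : Sat M t (elim p (minterm P S)) := by
  rw [minterm, elim_bigAnd, sat_bigAnd]
  rw [minterm, sat_bigAnd] at h
  rintro ψ hψ
  rcases List.mem_map.1 hψ with ⟨φ, hφ, rfl⟩
  rcases List.mem_map.1 hφ with ⟨q, hq, rfl⟩
  have hsat := h _ hφ
  by_cases hqS : q ∈ S
  · rw [if_pos hqS] at hsat ⊢
    by_cases hqp : q = p
    · simp [elim, hqp, Sat]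
    · simpa [elim, hqp] using hsat
  · rw [if_neg hqS] at hsat ⊢
    by_cases hqp : q = p
    · simp [elim, hqp, Sat]
    · simpa [elim, hqp] using hsat

theorem sat_elim_toFormula (M : KModel n W) (P : Finset ℕ) (hP : P.Nonempty) :
    ∀ (k : ℕ) (d : CData n) (t : W), Sat M t (toFormula P k d) →
      Sat M t (elim p (toFormula P k d)) := by
  intro k
  induction k with
  | zero =>
      intro d t h
      simp only [toFormula] at h ⊢
      exact sat_elim_minterm h
  | succ k ih =>
      intro d t h
      simp only [toFormula] at h ⊢
      obtain ⟨h1, h2⟩ := h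
      have hx := (sat_bigAnd M t _).1 h2
      show Sat M t (.and (elim p (minterm P (d.S ∩ P))) (elim p (bigAnd _)))
      refine ⟨sat_elim_minterm h1, ?_⟩
      rw [elim_bigAnd, sat_bigAnd]
      rintro ψ hψ
      rcases List.mem_map.1 hψ with ⟨ψ', hψ', rfl⟩
      rcases List.mem_map.1 hψ' with ⟨B, hB, rfl⟩
      have nB := (sat_nabla M t B _).1 (hx _ (List.mem_map.2 ⟨B, hB, rfl⟩))
      set Φ := normList ((d.succ B.1).map fun c => toFormula P k c) with hΦ
      show Sat M t (.and (.D B (elim p (bigOr Φ))) (elim p (bigAnd (Φ.map fun φ => .neg (.D B (.neg φ))))))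
      refine ⟨?_, ?_⟩
      · intro v hv
        rcases nB.1 v hv with ⟨φ, hφ, hsv⟩
        rcases List.mem_map.1 (mem_normList.1 hφ) with ⟨c, hc, rfl⟩
        rw [elim_bigOr, sat_bigOr]
        exact ⟨_, List.mem_map.2 ⟨_, hφ, rfl⟩, ih c v hsv⟩
      · rw [elim_bigAnd, sat_bigAnd]
        rintro χ hχ
        rcases List.mem_map.1 hχ with ⟨χ', hχ', rfl⟩
        rcases List.mem_map.1 hχ' with ⟨φ, hφ, rfl⟩
        rcases List.mem_map.1 (mem_normList.1 hφ) with ⟨c, hc, rfl⟩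
        rcases nB.2 _ hφ with ⟨v, hv, hsv⟩
        have heq : elim p (Formula.neg (.D B (.neg (toFormula P k c)))) =
            Formula.neg (.D B (.neg (elim p (toFormula P k c)))) := by
          rw [elim_neg_not_atom (by intro q h; cases h)]
          show Formula.neg (.D B (elim p (.neg (toFormula P k c)))) = _
          rw [elim_neg_not_atom (toFormula_isAnd hP k c)]
        rw [heq]
        intro hall
        exact hall v hv (ih c v hsv)

end Aux7
section Aux8

variable {n : ℕ} {W W' : Type} {p : ℕ}

theorem bisim_preserves {M : KModel n W} {M' : KModel n W'} {ρ : W → W' → Prop}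
    (hρ : ∀ u u', ρ u u' →
      ((∀ q : ℕ, q ≠ p → (q ∈ M.V u ↔ q ∈ M'.V u')) ∧
       (∀ B : Finset (Fin n), B.Nonempty → ∀ v, M.RB B u v → ∃ v', M'.RB B u' v' ∧ ρ v v') ∧
       (∀ B : Finset (Fin n), B.Nonempty → ∀ v', M'.RB B u' v' → ∃ v, M.RB B u v ∧ ρ v v'))) :
    ∀ φ : Formula n, p ∉ φ.atoms → ∀ u u', ρ u u' → (Sat M u φ ↔ Sat M' u' φ) := by
  intro φ
  induction φ with
  | top => intro _ u u' _; simp [Sat]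
  | bot => intro _ u u' _; simp [Sat]
  | atom q =>
      intro hq u u' hu
      have : q ≠ p := by simpa [Formula.atoms, eq_comm] using hq
      exact (hρ u u' hu).1 q this
  | neg φ ih =>
      intro hq u u' hu
      have : p ∉ φ.atoms := hq
      exact not_congr (ih this u u' hu)
  | and φ ψ ihφ ihψ =>
      intro hq u u' hu
      simp only [Formula.atoms, Finset.mem_union] at hq
      push_neg at hq
      exact and_congr (ihφ hq.1 u u' hu) (ihψ hq.2 u u' hu)
  | or φ ψ ihφ ihψ =>
      intro hq u u' hu
      simp only [Formula.atoms, Finset.mem_union] at hq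
      push_neg at hq
      exact or_congr (ihφ hq.1 u u' hu) (ihψ hq.2 u u' hu)
  | D B φ ih =>
      intro hq u u' hu
      have hφ : p ∉ φ.atoms := hq
      constructor
      · intro h v' hv'
        rcases (hρ u u' hu).2.2 B.1 B.2 v' hv' with ⟨v, hv, hvv'⟩
        exact (ih hφ v v' hvv').1 (h v hv)
      · intro h v hv
        rcases (hρ u u' hu).2.1 B.1 B.2 v hv with ⟨v', hv', hvv'⟩
        exact (ih hφ v v' hvv').2 (h v' hv')

theorem atoms_elim {φ : Formula n} :
    ∀ q ∈ (elim p φ).atoms, q ∈ φ.atoms ∧ q ≠ p := by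
  induction φ with
  | top => simp [elim, Formula.atoms]
  | bot => simp [elim, Formula.atoms]
  | atom r =>
      intro q hq
      by_cases hr : r = p
      · simp [elim, hr, Formula.atoms] at hq
      · simp [elim, hr, Formula.atoms] at hq
        subst hq
        exact ⟨by simp [Formula.atoms], hr⟩
  | neg φ ih =>
      intro q hq
      cases φ with
      | atom r =>
          by_cases hr : r = p
          · simp [elim, hr, Formula.atoms] at hq
          · simp [elim, hr, Formula.atoms] at hq
            subst hq
            exact ⟨by simp [Formula.atoms], hr⟩
      | top => exact ih q hq
      | bot => exact ih q hq
      | neg ψ => exact ih q hq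
      | and ψ χ => exact ih q hq
      | or ψ χ => exact ih q hq
      | D B ψ => exact ih q hq
  | and φ ψ ihφ ihψ =>
      intro q hq
      rcases Finset.mem_union.1 hq with h | h
      · exact ⟨Finset.mem_union.2 (Or.inl (ihφ q h).1), (ihφ q h).2⟩
      · exact ⟨Finset.mem_union.2 (Or.inr (ihψ q h).1), (ihψ q h).2⟩
  | or φ ψ ihφ ihψ =>
      intro q hq
      rcases Finset.mem_union.1 hq with h | h
      · exact ⟨Finset.mem_union.2 (Or.inl (ihφ q h).1), (ihφ q h).2⟩
      · exact ⟨Finset.mem_union.2 (Or.inr (ihψ q h).1), (ihψ q h).2⟩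
  | D B φ ih => exact ih

theorem atoms_toFormula_subset (P : Finset ℕ) :
    ∀ (k : ℕ) (d : CData n), (toFormula P k d).atoms ⊆ P := by
  intro k
  induction k with
  | zero =>
      intro d q hq
      exact mem_atoms_minterm.1 hq
  | succ k ih =>
      intro d q hq
      simp only [toFormula, Formula.atoms, Finset.mem_union] at hq
      rcases hq with h | h
      · exact mem_atoms_minterm.1 h
      · rw [mem_atoms_bigAnd] at h
        rcases h with ⟨ψ, hψ, hq⟩
        rcases List.mem_map.1 hψ with ⟨B, _, rfl⟩
        simp only [nabla, Formula.atoms, Finset.mem_union] at hq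
        rcases hq with h | h
        · rw [mem_atoms_bigOr] at h
          rcases h with ⟨φ, hφ, hq⟩
          rcases List.mem_map.1 (mem_normList.1 hφ) with ⟨c, _, rfl⟩
          exact ih c hq
        · rw [mem_atoms_bigAnd] at h
          rcases h with ⟨χ, hχ, hq⟩
          rcases List.mem_map.1 hχ with ⟨φ, hφ, rfl⟩
          rcases List.mem_map.1 (mem_normList.1 hφ) with ⟨c, _, rfl⟩
          exact ih c hq

theorem subset_atoms_toFormula (P : Finset ℕ) (k : ℕ) (d : CData n) :
    P ⊆ (toFormula P k d).atoms := by
  intro q hq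
  cases k with
  | zero => exact mem_atoms_minterm.2 hq
  | succ k =>
      simp only [toFormula, Formula.atoms, Finset.mem_union]
      exact Or.inl (mem_atoms_minterm.2 hq)

end Aux8
/-- the guideline theorem for constructing results of forgetting. -/
theorem forgetting_guideline {n : ℕ} (L : MSys) (P : Finset ℕ) (p : ℕ) (hp : p ∈ P)
    (k : ℕ) (d : CData n) (hsat : SatL L (cf P k d))
    (l : ℕ) (hl : k ≤ l)
    (H : ∀ e : CData n, SatL L (cf P l e) → cfUp P l k e = cf P k d →
      ∀ (W' : Type) (M' : KModel n W') (s' : W'), IsModel L M' →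
        Sat M' s' (elim p (cf P l e)) →
        ∃ (W : Type) (M : KModel n W) (s : W),
          IsModel L M ∧ Sat M s (cf P k d) ∧ CollPBisim M s M' s' p) :
    ∀ Γ : List (Formula n),
      (∀ γ : Formula n,
        γ ∈ Γ ↔ ∃ e : CData n, γ = cf P l e ∧ SatL L γ ∧ cfUp P l k e = cf P k d) →
      IsForget L (cf P k d) p (bigOr (Γ.map (elim p))) := by
  intro Γ hΓ
  have hPne : P.Nonempty := ⟨p, hp⟩
  refine ⟨?_, ?_, ?_⟩
  · -- atoms condition
    intro q hq
    rcases (mem_atoms_bigOr _).1 hq with ⟨ψ, hψ, hqψ⟩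
    rcases List.mem_map.1 hψ with ⟨γ, hγ, rfl⟩
    rcases (hΓ γ).1 hγ with ⟨e, rfl, -, -⟩
    obtain ⟨hqγ, hqp⟩ := atoms_elim q hqψ
    have hqP : q ∈ P := atoms_toFormula_subset P l e hqγ
    exact Finset.mem_erase.2 ⟨hqp, subset_atoms_toFormula P k d hqP⟩
  · -- Forth
    intro W W' M M' s s' hM hM' hsδ hbisim
    set e := extract M P l s with he
    have hsγ : Sat M s (toFormula P l e) := extract_sat M P l s
    have hup : Sat M s (toFormula P (min l k) (upD l k e)) := sat_upD M P l k e s hsγ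
    rw [min_eq_right hl] at hup
    have hcfUp : cfUp P l k e = cf P k d := by
      show toFormula P (min l k) (upD l k e) = toFormula P k d
      rw [min_eq_right hl]
      exact toFormula_unique M P k _ d s hup hsδ
    have hγΓ : cf P l e ∈ Γ := (hΓ _).2 ⟨e, rfl, ⟨W, M, s, hM, hsγ⟩, hcfUp⟩
    have hselim : Sat M s (elim p (toFormula P l e)) :=
      sat_elim_toFormula M P hPne l e s hsγ
    obtain ⟨ρ, hρs, hρ⟩ := hbisim
    have hpnot : p ∉ (elim p (toFormula P l e)).atoms := fun h => (atoms_elim p h).2 rfl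
    have hs' : Sat M' s' (elim p (toFormula P l e)) :=
      (bisim_preserves hρ _ hpnot s s' hρs).1 hselim
    rw [sat_bigOr]
    exact ⟨_, List.mem_map.2 ⟨_, hγΓ, rfl⟩, hs'⟩
  · -- Back
    intro W' M' s' hM' hsψ
    rw [sat_bigOr] at hsψ
    rcases hsψ with ⟨ψ', hψ', hs⟩
    rcases List.mem_map.1 hψ' with ⟨γ, hγ, rfl⟩
    rcases (hΓ γ).1 hγ with ⟨e, rfl, hsatγ, hupγ⟩
    exact H e hsatγ hupγ W' M' s' hM' hs

end DKLogic
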